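/- Pointwise decay bound at infinity: Let f : [0,∞) → (0,∞) be a C¹ function such that z ↦ z f(z) and z ↦ f'(z)²/f(z) are integrable on (0,∞) and f(z) → 0 as z → ∞. Then for every x > 0: f(x)² ≤ (1/x) · (∫₀^∞ z f(z) dz) · (∫₀^∞ f'(z)²/f(z) dz). -/

import Mathlib

open MeasureTheory Set Filter

/-- Pointwise decay bound at infinity: for a positive C¹ function `f` on
`[0,∞)` with `z f(z)` and `f'²/f` integrable and `f → 0` at infinity, for every
`x > 0`, `f(x)² ≤ (1/x) (∫ z f) (∫ f'²/f)`. -/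
theorem pointwise_decay_bound
    (f f' : ℝ → ℝ)
    (hpos : ∀ z : ℝ, 0 ≤ z → 0 < f z)
    (hderiv : ∀ z : ℝ, 0 ≤ z → HasDerivAt f (f' z) z)
    (hcont : ContinuousOn f' (Ici 0))
    (hint1 : IntegrableOn (fun z => z * f z) (Ioi 0))
    (hfisher : IntegrableOn (fun z => (f' z) ^ 2 / f z) (Ioi 0))
    (hlim : Tendsto f atTop (nhds 0)) :
    ∀ x : ℝ, 0 < x →
      (f x) ^ 2 ≤ (1 / x) * (∫ z in Ioi (0:ℝ), z * f z)
        * ∫ z in Ioi (0:ℝ), (f' z) ^ 2 / f z := by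
  intro x hx
  have hfx : 0 < f x := hpos x hx.le
  have contf : ContinuousOn f (Ici 0) := fun z hz =>
    ((hderiv z hz).continuousAt).continuousWithinAt
  have hxsub : Ioi x ⊆ Ioi (0:ℝ) := Ioi_subset_Ioi hx.le
  have hsub' : Ioi x ⊆ Ici (0:ℝ) := fun z hz => (hx.trans hz).le
  have hfm : AEStronglyMeasurable f (volume.restrict (Ioi x)) :=
    (contf.mono hsub').aestronglyMeasurable measurableSet_Ioi
  have hf'm : AEStronglyMeasurable f' (volume.restrict (Ioi x)) :=
    (hcont.mono hsub').aestronglyMeasurable measurableSet_Ioi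
  have hintx : IntegrableOn (fun z => z * f z) (Ioi x) := hint1.mono_set hxsub
  have hAx : IntegrableOn (fun z => (f' z) ^ 2 / f z) (Ioi x) := hfisher.mono_set hxsub
  -- integrability of f on Ioi x
  have hfint : IntegrableOn f (Ioi x) := by
    refine Integrable.mono' (hintx.const_mul (1/x)) hfm ?_
    filter_upwards [ae_restrict_mem measurableSet_Ioi] with z hz
    have hz0 : 0 < z := hx.trans hz
    have hfz : 0 < f z := hpos z hz0.le
    rw [Real.norm_eq_abs, abs_of_pos hfz, one_div, inv_mul_eq_div, le_div_iff₀ hx]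
    nlinarith [hfz.le, (le_of_lt hz : x ≤ z)]
  -- pointwise AM-GM inequality
  have pw : ∀ t : ℝ, 0 < t → ∀ z ∈ Ioi x, 2 * t * ‖f' z‖ ≤ t ^ 2 * ((f' z) ^ 2 / f z) + f z := by
    intro t ht z hz
    have hfz : 0 < f z := hpos z (hx.trans hz).le
    have h1 : t ^ 2 * ((f' z) ^ 2 / f z) + f z = (t ^ 2 * (f' z) ^ 2 + (f z) ^ 2) / f z := by
      field_simp
    rw [h1, le_div_iff₀ hfz, Real.norm_eq_abs]
    nlinarith [sq_nonneg (t * |f' z| - f z), sq_abs (f' z), abs_nonneg (f' z), ht.le]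
  -- integrability of f' on Ioi x
  have hf'int : IntegrableOn f' (Ioi x) := by
    refine Integrable.mono' (((hAx.add hfint).const_mul (1/2))) hf'm ?_
    filter_upwards [ae_restrict_mem measurableSet_Ioi] with z hz
    have := pw 1 one_pos z hz
    simp only [one_pow, one_mul, Real.norm_eq_abs] at this
    simp only [Pi.add_apply, Real.norm_eq_abs]
    linarith
  -- FTC : ∫_{Ioi x} f' = - f x
  have hftc : (∫ z in Ioi x, f' z) = 0 - f x := by
    have h1 : Tendsto (fun b => ∫ z in x..b, f' z) atTop (nhds (∫ z in Ioi x, f' z)) :=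
      intervalIntegral_tendsto_integral_Ioi x hf'int tendsto_id
    have h2 : ∀ᶠ b in atTop, (∫ z in x..b, f' z) = f b - f x := by
      filter_upwards [eventually_ge_atTop x] with b hb
      have hsub : uIcc x b ⊆ Ici (0:ℝ) := by
        rw [uIcc_of_le hb]
        exact fun z hz => le_trans hx.le hz.1
      exact intervalIntegral.integral_eq_sub_of_hasDerivAt
        (fun t ht => hderiv t (hsub ht)) ((hcont.mono hsub).intervalIntegrable)
    have h3 : Tendsto (fun b => f b - f x) atTop (nhds (0 - f x)) := hlim.sub_const _
    exact tendsto_nhds_unique (h1.congr' h2) h3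
  have hfx_le : f x ≤ ∫ z in Ioi x, ‖f' z‖ := by
    have heq : f x = ‖∫ z in Ioi x, f' z‖ := by
      rw [hftc]; simp [Real.norm_eq_abs, abs_of_pos hfx]
    rw [heq]
    exact norm_integral_le_integral_norm _
  set A := ∫ z in Ioi x, (f' z) ^ 2 / f z with hA
  set B := ∫ z in Ioi x, f z with hB
  set A0 := ∫ z in Ioi (0:ℝ), (f' z) ^ 2 / f z with hA0
  set M := ∫ z in Ioi (0:ℝ), z * f z with hM
  have hAnn : 0 ≤ A := setIntegral_nonneg measurableSet_Ioi fun z hz =>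
    div_nonneg (sq_nonneg _) (hpos z (hx.trans hz).le).le
  have hBnn : 0 ≤ B := setIntegral_nonneg measurableSet_Ioi fun z hz =>
    (hpos z (hx.trans hz).le).le
  have hA0nn : 0 ≤ A0 := setIntegral_nonneg measurableSet_Ioi fun z hz =>
    div_nonneg (sq_nonneg _) (hpos z hz.le).le
  -- key quadratic inequality
  have hkey : ∀ t : ℝ, 0 < t → 2 * f x * t ≤ t ^ 2 * A + B := by
    intro t ht
    have h1 : (∫ z in Ioi x, 2 * t * ‖f' z‖)
        ≤ ∫ z in Ioi x, (t ^ 2 * ((f' z) ^ 2 / f z) + f z) :=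
      setIntegral_mono_on (hf'int.norm.const_mul (2 * t))
        ((hAx.const_mul (t ^ 2)).add hfint) measurableSet_Ioi (pw t ht)
    rw [integral_add (hAx.const_mul (t ^ 2)) hfint] at h1
    rw [integral_const_mul] at h1
    rw [integral_const_mul] at h1
    have h2 : 2 * t * f x ≤ 2 * t * ∫ z in Ioi x, ‖f' z‖ :=
      mul_le_mul_of_nonneg_left hfx_le (by positivity)
    nlinarith
  -- B ≤ (1/x) * M
  have hBle : B ≤ (1 / x) * M := by
    have h1 : B ≤ ∫ z in Ioi x, (1 / x) * (z * f z) := by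
      refine setIntegral_mono_on hfint (hintx.const_mul _) measurableSet_Ioi ?_
      intro z hz
      have hfz : 0 < f z := hpos z (hx.trans hz).le
      rw [one_div, inv_mul_eq_div, le_div_iff₀ hx]
      nlinarith [hfz.le, (le_of_lt hz : x ≤ z)]
    rw [integral_const_mul] at h1
    refine h1.trans (mul_le_mul_of_nonneg_left ?_ (by positivity))
    refine setIntegral_mono_set hint1 ?_ (HasSubset.Subset.eventuallyLE hxsub)
    filter_upwards [ae_restrict_mem measurableSet_Ioi] with z hz
    exact mul_nonneg (le_of_lt hz) (hpos z (le_of_lt hz)).le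
  -- A ≤ A0
  have hAle : A ≤ A0 := by
    refine setIntegral_mono_set hfisher ?_ (HasSubset.Subset.eventuallyLE hxsub)
    filter_upwards [ae_restrict_mem measurableSet_Ioi] with z hz
    exact div_nonneg (sq_nonneg _) (hpos z (le_of_lt hz)).le
  -- conclude f x ^ 2 ≤ A * B
  have hABfx : f x ^ 2 ≤ A * B := by
    rcases hAnn.lt_or_eq with hApos | hAeq
    · have h' := hkey (f x / A) (div_pos hfx hApos)
      have hA' : A ≠ 0 := ne_of_gt hApos
      have hA' : A ≠ 0 := ne_of_gt hApos
      have e1 : 2 * f x * (f x / A) = 2 * (f x ^ 2 / A) := by field_simp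
      have e2 : (f x / A) ^ 2 * A = f x ^ 2 / A := by field_simp
      rw [e1, e2] at h'
      have h3 : f x ^ 2 / A ≤ B := by linarith
      have h4 : f x ^ 2 / A * A ≤ B * A := mul_le_mul_of_nonneg_right h3 hApos.le
      have h5 : f x ^ 2 / A * A = f x ^ 2 := by field_simp
      nlinarith
    · exfalso
      have h' := hkey ((B + 1) / (2 * f x)) (by positivity)
      rw [← hAeq] at h'
      have h'' : 2 * f x * ((B + 1) / (2 * f x)) = B + 1 := by field_simp
      rw [h''] at h'
      linarith
  calc f x ^ 2 ≤ A * B := hABfx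
    _ ≤ A0 * ((1 / x) * M) := mul_le_mul hAle hBle hBnn hA0nn
    _ = 1 / x * M * A0 := by ring
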